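/- For every prime power q ≥ 3 there exists a subgroup G of Aut(T_q) that is self-similar, finite-state, and coarsely diagonal, is not finitely generated, and has finite abelianization. -/

import Mathlib

namespace RoverNekrashevych

variable {X : Type*}

/-- The state (section) of `f` at the word `u`. -/
def state (f : List X → List X) (u : List X) : List X → List X :=
  fun w => (f (u ++ w)).drop u.length

/-- `f` is an automorphism of the infinite rooted tree with vertex set `List X`. -/
def IsTreeAut (f : Equiv.Perm (List X)) : Prop :=
  f [] = [] ∧ ∀ (u : List X) (x : X), ∃ y : X, f (u ++ [x]) = f u ++ [y]

/-- `G` consists of tree automorphisms. -/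
def IsTreeAutGroup (G : Subgroup (Equiv.Perm (List X))) : Prop :=
  ∀ f ∈ G, IsTreeAut f

/-- `G` is self-similar: all states of elements of `G` are realized by elements of `G`. -/
def SelfSimilar (G : Subgroup (Equiv.Perm (List X))) : Prop :=
  ∀ f ∈ G, ∀ u : List X, ∃ g ∈ G, ⇑g = state (⇑f) u

/-- A function is finite-state if it has only finitely many states. -/
def FiniteStateFun (f : List X → List X) : Prop :=
  Set.Finite {g : List X → List X | ∃ u : List X, g = state f u}

/-- `G` is finite-state if all its elements are. -/
def FiniteStateGroup (G : Subgroup (Equiv.Perm (List X))) : Prop :=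
  ∀ f ∈ G, FiniteStateFun ⇑f

/-- `G` is `i`-persistent: the state of every element at `[i]` is the element itself. -/
def Persistent (G : Subgroup (Equiv.Perm (List X))) (i : X) : Prop :=
  ∀ f ∈ G, state (⇑f) [i] = ⇑f

/-- `G` is coarsely diagonal: for `f ∈ G`, each state `f_u` is realized by some `g ∈ G`,
and `g⁻¹ * f` has finite order. -/
def CoarselyDiagonal (G : Subgroup (Equiv.Perm (List X))) : Prop :=
  ∀ f ∈ G, ∀ u : List X, ∃ g ∈ G, ⇑g = state (⇑f) u ∧ IsOfFinOrder (g⁻¹ * f)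

/-- The length-`n` prefix of a boundary point `p : ℕ → X`. -/
def prefixFn (p : ℕ → X) (n : ℕ) : List X :=
  List.ofFn fun i : Fin n => p i

/-- The homeomorphism of the boundary `ℕ → X` induced by a tree automorphism:
for every `n`, the length-`n` prefix of `boundary f p` is the `f`-image of the
length-`n` prefix of `p`. -/
def boundary (f : List X → List X) (p : ℕ → X) : ℕ → X :=
  fun n => (f (prefixFn p (n + 1))).getD n (p n)

/-- Concatenation `u·p` of a finite word and a boundary point. -/
def catWord (u : List X) (p : ℕ → X) : ℕ → X :=
  fun n => if h : n < u.length then u.get ⟨n, h⟩ else p (n - u.length)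

/-- A leaf set: a finite set of words such that every boundary point has exactly one
prefix in the set. -/
def IsLeafSet (L : Set (List X)) : Prop :=
  L.Finite ∧ ∀ p : ℕ → X, ∃! u : List X, u ∈ L ∧ prefixFn p u.length = u

variable [LinearOrder X]

/-- The triple `(L₋, σ, (g_1,…,g_n), L₊)`, with the leaves of `L₋` and `L₊` listed by the
strictly increasing (in the lexicographic order) enumerations `u` and `v`, represents the
homeomorphism `h` of the boundary: `h (vᵢ·p) = u_{σ i}·(ĝᵢ p)` for all `i` and `p`. -/
def Represents (G : Subgroup (Equiv.Perm (List X))) (h : (ℕ → X) → ℕ → X)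
    (n : ℕ) (u v : Fin n → List X) (σ : Equiv.Perm (Fin n))
    (g : Fin n → Equiv.Perm (List X)) : Prop :=
  StrictMono u ∧ StrictMono v ∧ IsLeafSet (Set.range u) ∧ IsLeafSet (Set.range v) ∧
  (∀ i, g i ∈ G) ∧
  ∀ (i : Fin n) (p : ℕ → X), h (catWord (v i) p) = catWord (u (σ i)) (boundary (⇑(g i)) p)

/-- The underlying set of the Röver–Nekrashevych group `V_d(G)`: all self-bijections of the
boundary represented by some triple. -/
def RNSet (G : Subgroup (Equiv.Perm (List X))) : Set (Equiv.Perm (ℕ → X)) :=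
  {h | ∃ (n : ℕ) (u v : Fin n → List X) (σ : Equiv.Perm (Fin n))
      (g : Fin n → Equiv.Perm (List X)), Represents G (⇑h) n u v σ g}



/-! ### Auxiliary construction: `AGL₁(𝔽_q[t])` acting on the `q`-ary tree -/

section Construction

open Polynomial

variable {Y R : Type*} [Field R] (e : Y ≃ R)

/-- The action of the affine map `f ↦ a·f + b` (for `b` a polynomial) on words,
coefficient by coefficient. -/
noncomputable def actF (a : R) (b : R[X]) : List Y → List Y
  | [] => []
  | c :: w => e.symm (a * e c + b.coeff 0) :: actF a b.divX w

@[simp] lemma actF_nil (a : R) (b : R[X]) : actF e a b [] = [] := rfl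
@[simp] lemma actF_cons (a : R) (b : R[X]) (c : Y) (w : List Y) :
    actF e a b (c :: w) = e.symm (a * e c + b.coeff 0) :: actF e a b.divX w := rfl

@[simp] lemma length_actF (a : R) (b : R[X]) (w : List Y) :
    (actF e a b w).length = w.length := by
  induction w generalizing b with
  | nil => rfl
  | cons c w ih => simp [ih]

lemma divX_smul_add (a : R) (b b' : R[X]) :
    (a • b' + b).divX = a • b'.divX + b.divX := by
  ext i; simp [coeff_divX]

lemma actF_comp (a a' : R) (b b' : R[X]) (w : List Y) :
    actF e a b (actF e a' b' w) = actF e (a * a') (a • b' + b) w := by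
  induction w generalizing b b' with
  | nil => rfl
  | cons c w ih =>
    simp only [actF_cons, Equiv.apply_symm_apply, divX_smul_add, ih]
    congr 2
    simp [coeff_smul, smul_eq_mul]
    ring

lemma actF_one_zero : actF e 1 0 = id := by
  funext w
  induction w with
  | nil => rfl
  | cons c w ih =>
    have h0 : (0 : R[X]).divX = 0 := by ext i; simp [coeff_divX]
    simp [h0, ih]

/-- The affine map `f ↦ a·f + b` as a permutation of the vertex set of the tree. -/
noncomputable def actP (a : Rˣ) (b : R[X]) : Equiv.Perm (List Y) where
  toFun := actF e (a : R) b
  invFun := actF e ((a⁻¹ : Rˣ) : R) (-(((a⁻¹ : Rˣ) : R) • b))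
  left_inv w := by
    rw [actF_comp]
    simp only [Units.inv_mul, add_neg_cancel]
    rw [actF_one_zero]; rfl
  right_inv w := by
    rw [actF_comp]
    simp only [smul_neg, smul_smul, Units.mul_inv, one_smul, add_neg_cancel, neg_add_cancel]
    rw [actF_one_zero]; rfl

@[simp] lemma coe_actP (a : Rˣ) (b : R[X]) : ⇑(actP e a b) = actF e (a : R) b := rfl

lemma actP_mul (a a' : Rˣ) (b b' : R[X]) :
    actP e a b * actP e a' b' = actP e (a * a') ((a : R) • b' + b) := by
  apply Equiv.ext
  intro w
  simp only [Equiv.Perm.mul_apply, coe_actP, Units.val_mul]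
  exact actF_comp e _ _ _ _ _

lemma actP_one : (actP e 1 0 : Equiv.Perm (List Y)) = 1 := by
  apply Equiv.ext
  intro w
  show actF e ((1 : Rˣ) : R) 0 w = w
  rw [Units.val_one, actF_one_zero]; rfl

lemma actP_inv (a : Rˣ) (b : R[X]) :
    (actP e a b)⁻¹ = actP e a⁻¹ (-(((a⁻¹ : Rˣ) : R) • b)) :=
  Equiv.ext fun _ => rfl

lemma coeff_divX_iter (b : R[X]) (n i : ℕ) :
    (Polynomial.divX^[n] b).coeff i = b.coeff (n + i) := by
  induction n generalizing b with
  | zero => simp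
  | succ n ih =>
    rw [Function.iterate_succ_apply, ih, coeff_divX]
    congr 1; omega

lemma divX_iter_eq_zero {b : R[X]} {n : ℕ} (h : b.natDegree < n) :
    Polynomial.divX^[n] b = 0 := by
  ext i
  rw [coeff_divX_iter, coeff_zero]
  exact coeff_eq_zero_of_natDegree_lt (lt_of_lt_of_le h (Nat.le_add_right n i))

lemma actF_append (a : R) (b : R[X]) (u v : List Y) :
    actF e a b (u ++ v) = actF e a b u ++ actF e a (Polynomial.divX^[u.length] b) v := by
  induction u generalizing b with
  | nil => simp
  | cons c u ih =>
    simp only [List.cons_append, actF_cons, ih, List.length_cons]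
    rw [Function.iterate_succ_apply]

lemma state_actF (a : R) (b : R[X]) (u : List Y) :
    state (actF e a b) u = actF e a (Polynomial.divX^[u.length] b) := by
  funext w
  unfold state
  rw [actF_append, List.drop_left' (by simp)]

lemma actF_heads {a a' : R} {b b' : R[X]} (h : actF e a b = actF e a' b') (x : R) :
    a * x + b.coeff 0 = a' * x + b'.coeff 0 := by
  have h1 := congrFun h [e.symm x]
  simpa using h1

lemma actF_tails {a a' : R} {b b' : R[X]} (h : actF e a b = actF e a' b') :
    actF e a b.divX = actF e a' b'.divX := by
  funext w
  have h1 := congrFun h (e.symm 0 :: w)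
  simp only [actF_cons] at h1
  exact (List.cons.injEq _ _ _ _ ▸ h1).2

lemma actF_inj {a a' : R} {b b' : R[X]} (h : actF e a b = actF e a' b') :
    a = a' ∧ b = b' := by
  have hcoeff : ∀ (i : ℕ) (c c' : R[X]) (a₁ a₂ : R),
      actF e a₁ c = actF e a₂ c' → c.coeff i = c'.coeff i := by
    intro i
    induction i with
    | zero =>
      intro c c' a₁ a₂ hh
      have := actF_heads e hh 0
      simpa using this
    | succ i ih =>
      intro c c' a₁ a₂ hh
      have := ih c.divX c'.divX a₁ a₂ (actF_tails e hh)
      simpa [coeff_divX] using this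
  have hb0 : b.coeff 0 = b'.coeff 0 := hcoeff 0 b b' a a' h
  have ha : a = a' := by
    have h1 := actF_heads e h 1
    rw [mul_one, mul_one, hb0] at h1
    exact add_right_cancel h1
  exact ⟨ha, Polynomial.ext fun i => hcoeff i b b' a a' h⟩

lemma actP_inj {a a' : Rˣ} {b b' : R[X]} (h : actP e a b = actP e a' b') :
    a = a' ∧ b = b' := by
  have h2 : actF e (a : R) b = actF e (a' : R) b' := by
    rw [← coe_actP e a b, ← coe_actP e a' b', h]
  obtain ⟨h3, h4⟩ := actF_inj e h2
  exact ⟨Units.ext h3, h4⟩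

lemma actP_one_pow (c : R[X]) (k : ℕ) :
    (actP e 1 c) ^ k = actP e 1 (k • c) := by
  induction k with
  | zero => rw [pow_zero, zero_smul, actP_one]
  | succ k ih =>
    rw [pow_succ, ih, actP_mul, one_mul, Units.val_one, one_smul, succ_nsmul, add_comm]

lemma actP_pow_exists (a : Rˣ) (b : R[X]) (k : ℕ) :
    ∃ c, (actP e a b) ^ k = actP e (a ^ k) c := by
  induction k with
  | zero => exact ⟨0, by rw [pow_zero, pow_zero, actP_one]⟩
  | succ k ih =>
    obtain ⟨c, hc⟩ := ih
    exact ⟨_, by rw [pow_succ (actP e a b) k, hc, actP_mul, pow_succ a k]⟩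

lemma actP_finOrder [Finite Rˣ] {p : ℕ} [CharP R p] (hp : p ≠ 0) (a : Rˣ) (b : R[X]) :
    IsOfFinOrder (actP e a b) := by
  rw [isOfFinOrder_iff_pow_eq_one]
  obtain ⟨c, hc⟩ := actP_pow_exists e a b (orderOf a)
  refine ⟨orderOf a * p, Nat.mul_pos (orderOf_pos a) (Nat.pos_of_ne_zero hp), ?_⟩
  rw [pow_mul, hc, pow_orderOf_eq_one, actP_one_pow]
  have hc0 : (p : ℕ) • c = 0 := by
    ext i
    simp [Polynomial.coeff_smul, nsmul_eq_mul, CharP.cast_eq_zero R p]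
  rw [hc0, actP_one]

/-- The group `AGL₁(R[t])` as a subgroup of the permutations of the tree. -/
noncomputable def RG : Subgroup (Equiv.Perm (List Y)) where
  carrier := {f | ∃ (a : Rˣ) (b : R[X]), f = actP e a b}
  one_mem' := ⟨1, 0, (actP_one e).symm⟩
  mul_mem' := by
    rintro f g ⟨a, b, rfl⟩ ⟨a', b', rfl⟩
    exact ⟨a * a', (a : R) • b' + b, actP_mul e a a' b b'⟩
  inv_mem' := by
    rintro f ⟨a, b, rfl⟩
    exact ⟨a⁻¹, _, actP_inv e a b⟩

lemma actP_mem (a : Rˣ) (b : R[X]) : actP e a b ∈ RG e := ⟨a, b, rfl⟩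

/-- The subgroup of affine maps with translation part of degree at most `N`. -/
noncomputable def bdd (N : ℕ) : Subgroup (Equiv.Perm (List Y)) where
  carrier := {f | ∃ (a : Rˣ) (b : R[X]), b.natDegree ≤ N ∧ f = actP e a b}
  one_mem' := ⟨1, 0, by simp, (actP_one e).symm⟩
  mul_mem' := by
    rintro f g ⟨a, b, hb, rfl⟩ ⟨a', b', hb', rfl⟩
    refine ⟨a * a', (a : R) • b' + b, ?_, actP_mul e a a' b b'⟩
    exact le_trans (natDegree_add_le _ _)
      (max_le (le_trans (natDegree_smul_le _ _) hb') hb)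
  inv_mem' := by
    rintro f ⟨a, b, hb, rfl⟩
    refine ⟨a⁻¹, _, ?_, actP_inv e a b⟩
    rw [natDegree_neg]
    exact le_trans (natDegree_smul_le _ _) hb

lemma bdd_mono {N M : ℕ} (h : N ≤ M) : bdd e N ≤ bdd e M := by
  rintro f ⟨a, b, hb, rfl⟩
  exact ⟨a, b, le_trans hb h, rfl⟩

end Construction

/-- For every prime power `q ≥ 3` (and any alphabet `X` with `q` letters)
there is a subgroup `G` of `Aut(T_q)` that is self-similar, finite-state, and coarsely
diagonal, is not finitely generated, and has finite abelianization. -/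
theorem exists_selfSimilar_not_fg_finite_abelianization
    (q : ℕ) (hq : IsPrimePow q) (hq3 : 3 ≤ q)
    {Y : Type*} [Fintype Y] (hY : Fintype.card Y = q) :
    ∃ G : Subgroup (Equiv.Perm (List Y)),
      IsTreeAutGroup G ∧ SelfSimilar G ∧ FiniteStateGroup G ∧ CoarselyDiagonal G ∧
      ¬ Group.FG ↥G ∧ Finite (Abelianization ↥G) := by
  classical
  obtain ⟨p, n, hp, hn, hq'⟩ := hq
  haveI : Fact p.Prime := ⟨hp.nat_prime⟩
  haveI : Fintype (GaloisField p n) := Fintype.ofFinite _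
  have hcardR : Fintype.card (GaloisField p n) = q := by
    rw [← Nat.card_eq_fintype_card, GaloisField.card p n hn.ne', hq']
  obtain e : Y ≃ GaloisField p n := Fintype.equivOfCardEq (by rw [hY, hcardR])
  refine ⟨RG e, ?_, ?_, ?_, ?_, ?_, ?_⟩
  · -- tree automorphisms
    rintro f ⟨a, b, rfl⟩
    constructor
    · rfl
    · intro u x
      refine ⟨e.symm ((a : GaloisField p n) * e x +
        (Polynomial.divX^[u.length] b).coeff 0), ?_⟩
      show actF e (a : GaloisField p n) b (u ++ [x]) = _
      rw [actF_append]
      rfl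
  · -- self-similar
    rintro f ⟨a, b, rfl⟩ u
    exact ⟨actP e a (Polynomial.divX^[u.length] b), actP_mem e _ _,
      (state_actF e _ _ _).symm⟩
  · -- finite-state
    rintro f ⟨a, b, rfl⟩
    apply Set.Finite.subset ((Set.finite_Iic (b.natDegree + 1)).image
      (fun m => actF e (a : GaloisField p n) (Polynomial.divX^[m] b)))
    rintro g ⟨u, rfl⟩
    by_cases hu : u.length ≤ b.natDegree + 1
    · exact ⟨u.length, hu, (state_actF e _ _ _).symm⟩
    · refine ⟨b.natDegree + 1, Set.self_mem_Iic, ?_⟩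
      show actF e (a : GaloisField p n) (Polynomial.divX^[b.natDegree + 1] b) =
        state (actF e (a : GaloisField p n) b) u
      rw [state_actF, divX_iter_eq_zero (by omega), divX_iter_eq_zero (by omega)]
  · -- coarsely diagonal
    rintro f ⟨a, b, rfl⟩ u
    refine ⟨actP e a (Polynomial.divX^[u.length] b), actP_mem e _ _,
      (state_actF e _ _ _).symm, ?_⟩
    have hmem : (actP e a (Polynomial.divX^[u.length] b))⁻¹ * actP e a b ∈ RG e :=
      mul_mem (inv_mem (actP_mem e _ _)) (actP_mem e _ _)
    obtain ⟨a₂, b₂, h₂⟩ := hmem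
    rw [h₂]
    exact actP_finOrder e hp.ne_zero a₂ b₂
  · -- not finitely generated
    intro hFG
    rw [Group.fg_iff_subgroup_fg] at hFG
    obtain ⟨S, hS⟩ := hFG
    set Nf : Equiv.Perm (List Y) → ℕ :=
      fun f => if h : ∃ M, f ∈ bdd e M then h.choose else 0 with hNfdef
    have hNf : ∀ f : Equiv.Perm (List Y), (∃ M, f ∈ bdd e M) → f ∈ bdd e (Nf f) := by
      intro f h
      rw [hNfdef]
      simp only [dif_pos h]
      exact h.choose_spec
    set N : ℕ := S.sup Nf with hNdef
    have hle : RG e ≤ bdd e N := by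
      rw [← hS]
      rw [Subgroup.closure_le]
      intro f hfS
      have hfG : f ∈ RG e := by
        rw [← hS]
        exact Subgroup.subset_closure hfS
      obtain ⟨a, b, rfl⟩ := hfG
      have h1 : actP e a b ∈ bdd e (Nf (actP e a b)) :=
        hNf _ ⟨b.natDegree, a, b, le_refl _, rfl⟩
      exact bdd_mono e (Finset.le_sup hfS) h1
    have hmem : actP e 1 (Polynomial.X ^ (N + 1)) ∈ bdd e N := hle (actP_mem e _ _)
    obtain ⟨a, b, hb, heq⟩ := hmem
    obtain ⟨-, hbb⟩ := actP_inj e heq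
    rw [← hbb, Polynomial.natDegree_X_pow] at hb
    omega
  · -- finite abelianization
    have hcardU : 1 < Fintype.card (GaloisField p n)ˣ := by
      rw [Fintype.card_units, hcardR]
      omega
    obtain ⟨a₀, ha₀⟩ := Fintype.exists_ne_of_one_lt_card hcardU 1
    have ha₀R : ((a₀ : GaloisField p n) - 1) ≠ 0 := by
      rw [sub_ne_zero]
      intro h
      exact ha₀ (Units.ext (by rw [h, Units.val_one]))
    set φ := Abelianization.of (G := ↥(RG e)) with hφdef
    have hcomm : ∀ b' : Polynomial (GaloisField p n),
        φ ⟨actP e 1 b', actP_mem e 1 b'⟩ = 1 := by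
      intro b'
      set c : Polynomial (GaloisField p n) := ((a₀ : GaloisField p n) - 1)⁻¹ • b' with hcdef
      have h1 : actP e a₀ 0 * actP e 1 c = actP e a₀ ((a₀ : GaloisField p n) • c) := by
        rw [actP_mul, mul_one, add_zero]
      have h2 : (actP e a₀ 0)⁻¹ = actP e a₀⁻¹ 0 := by
        rw [actP_inv, smul_zero, neg_zero]
      have h3 : (actP e 1 c)⁻¹ = actP e 1 (-c) := by
        rw [actP_inv, inv_one, Units.val_one, one_smul]
      open scoped commutatorElement in
      have hperm : ⁅actP e a₀ 0, actP e 1 c⁆ = actP e 1 b' := by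
        rw [commutatorElement_def, h1, h2, h3, actP_mul, actP_mul, mul_inv_cancel, one_mul,
          Units.val_one, one_smul, smul_zero, zero_add]
        congr 1
        rw [add_comm, ← sub_eq_add_neg]
        have h4 : (a₀ : GaloisField p n) • c - c = ((a₀ : GaloisField p n) - 1) • c := by
          rw [sub_smul, one_smul]
        rw [h4, hcdef, smul_smul, mul_inv_cancel₀ ha₀R, one_smul]
      open scoped commutatorElement in
      have hsub : (⟨actP e 1 b', actP_mem e 1 b'⟩ : ↥(RG e)) =
          ⁅(⟨actP e a₀ 0, actP_mem e a₀ 0⟩ : ↥(RG e)), ⟨actP e 1 c, actP_mem e 1 c⟩⁆ := by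
        apply Subtype.ext
        simp only [commutatorElement_def, Subgroup.coe_mul, InvMemClass.coe_inv]
        exact hperm.symm
      rw [hsub, map_commutatorElement]
      exact commutatorElement_eq_one_iff_commute.mpr (mul_comm _ _)
    have hsurj : Function.Surjective
        (fun a : (GaloisField p n)ˣ => φ ⟨actP e a 0, actP_mem e a 0⟩) := by
      intro x
      obtain ⟨g, rfl⟩ := QuotientGroup.mk_surjective x
      have hx : (QuotientGroup.mk g : Abelianization ↥(RG e)) = φ g := rfl
      rw [hx]
      obtain ⟨a, b, hab⟩ := g.2
      have hg : g = ⟨actP e a b, by rw [← hab]; exact g.2⟩ := Subtype.ext hab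
      have hfact : (⟨actP e a b, by rw [← hab]; exact g.2⟩ : ↥(RG e)) =
          ⟨actP e 1 b, actP_mem e 1 b⟩ * ⟨actP e a 0, actP_mem e a 0⟩ := by
        apply Subtype.ext
        rw [Subgroup.coe_mul]
        show actP e a b = actP e 1 b * actP e a 0
        rw [actP_mul, one_mul, Units.val_one, smul_zero, zero_add]
      rw [hg, hfact, map_mul, hcomm b, one_mul]
      exact ⟨a, rfl⟩
    exact Finite.of_surjective _ hsurj


end RoverNekrashevych
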